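/- Let R = ℤ/p^kℤ and suppose S ⊆ R^n is a Kakeya set, i.e., for every b ∈ R^n with at least one unit coordinate there exists u_b ∈ R^n such that the line {u_b + t·b : t ∈ R} is contained in S. Let A be the 0/1 matrix over 𝔽_p whose rows are indexed by pairs (b, λ) with b ranging over representatives of directions (vectors with a unit coordinate up to unit scaling) and λ ∈ R, whose columns are indexed by R^n, and whose ((b,λ), y) entry is 1 iff ⟨b,y⟩ = λ. Then rank_{𝔽_p}(A) ≤ |S|. -/

import Mathlib

open scoped Classical

open Polynomial

namespace KakeyaAux

/-- inner product of two vectors over `ZMod N` -/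
def ip {n N : ℕ} (x y : Fin n → ZMod N) : ZMod N := ∑ i, x i * y i

lemma ip_comm {n N : ℕ} (x y : Fin n → ZMod N) : ip x y = ip y x :=
  Finset.sum_congr rfl fun i _ => mul_comm _ _

lemma ip_add_smul {n N : ℕ} (z u b : Fin n → ZMod N) (t : ZMod N) :
    ip z (u + t • b) = ip z u + t * ip z b := by
  unfold ip
  rw [Finset.mul_sum, ← Finset.sum_add_distrib]
  refine Finset.sum_congr rfl fun i _ => ?_
  simp only [Pi.add_apply, Pi.smul_apply, smul_eq_mul]
  ring

section Lift

variable {p : ℕ} [hp : Fact p.Prime]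
variable {R₀ : Type} [CommRing R₀] [IsDomain R₀] [IsNoetherianRing R₀]
/-- Linearly independent mod-p reductions lift to linearly independent vectors over the
fraction field. -/
lemma lift_indep (K : Type) [Field K] [Algebra R₀ K] [IsFractionRing R₀ K] (θ : R₀ →+* ZMod p) (π : R₀) (hπ : π ≠ 0) (hθπ : θ π = 0)
    (hker : ∀ a : R₀, θ a = 0 → a ∈ Ideal.span {π})
    {Z ι : Type} [Fintype Z] [Fintype ι]
    (f : ι → Z → ZMod p) (hf : LinearIndependent (ZMod p) f)
    (x : ι → Z → R₀) (hx : ∀ i z, θ (x i z) = f i z) :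
    LinearIndependent K (fun i => fun z => algebraMap R₀ K (x i z)) := by
  haveI : Fact (1 < p) := ⟨hp.out.one_lt⟩
  rw [Fintype.linearIndependent_iff]
  intro g hg
  by_contra hcon
  push_neg at hcon
  obtain ⟨i₀, hi₀⟩ := hcon
  -- clear denominators
  obtain ⟨b, hb⟩ := IsLocalization.exist_integer_multiples (nonZeroDivisors R₀) Finset.univ g
  choose c hc using fun i : ι => hb i (Finset.mem_univ i)
  have hinj : Function.Injective (algebraMap R₀ K) := IsFractionRing.injective R₀ K
  have hbK : algebraMap R₀ K (b : R₀) ≠ 0 := by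
    intro h
    have hb0 : (b : R₀) ≠ 0 := nonZeroDivisors.ne_zero b.2
    exact hb0 (hinj (by rwa [map_zero]))
  have hc0 : c i₀ ≠ 0 := by
    intro h
    apply hi₀
    have h2 := hc i₀
    rw [h, map_zero] at h2
    rw [Algebra.smul_def] at h2
    rcases mul_eq_zero.mp h2.symm with h' | h'
    · exact absurd h' hbK
    · exact h'
  -- componentwise sum is zero over R₀
  have hsum : ∀ z : Z, ∑ i, c i * x i z = 0 := by
    intro z
    apply hinj
    rw [map_sum, map_zero]
    have hgz : ∑ i, g i * algebraMap R₀ K (x i z) = 0 := by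
      have h3 := congrFun hg z
      simpa [Finset.sum_apply] using h3
    calc ∑ i, algebraMap R₀ K (c i * x i z)
        = ∑ i, (algebraMap R₀ K (b : R₀)) * (g i * algebraMap R₀ K (x i z)) := by
          refine Finset.sum_congr rfl fun i _ => ?_
          rw [map_mul, hc i, Algebra.smul_def]; ring
      _ = (algebraMap R₀ K (b : R₀)) * ∑ i, g i * algebraMap R₀ K (x i z) := by
          rw [Finset.mul_sum]
      _ = 0 := by rw [hgz, mul_zero]
  -- extract the largest common power of π
  set I : Ideal R₀ := Ideal.span {π} with hIdef
  have hItop : I ≠ ⊤ := by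
    intro h
    have h1 : (1 : R₀) ∈ I := h ▸ Submodule.mem_top
    obtain ⟨a, ha⟩ := Ideal.mem_span_singleton'.mp h1
    have hz : (1 : ZMod p) = 0 := by
      calc (1 : ZMod p) = θ 1 := (map_one θ).symm
        _ = θ a * θ π := by rw [← ha, map_mul]
        _ = 0 := by rw [hθπ, mul_zero]
    exact one_ne_zero hz
  have hbot : (⨅ j : ℕ, I ^ j) = ⊥ := Ideal.iInf_pow_eq_bot_of_isDomain I hItop
  have hex : ∃ j₀, c i₀ ∉ I ^ j₀ := by
    by_contra hno
    push_neg at hno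
    have hmem : c i₀ ∈ (⨅ j : ℕ, I ^ j) := Submodule.mem_iInf _ |>.mpr hno
    rw [hbot] at hmem
    exact hc0 (by simpa using hmem)
  obtain ⟨j₀, hj₀⟩ := hex
  set P : ℕ → Prop := fun j => ∀ i, c i ∈ I ^ j with hPdef
  have hP0 : P 0 := fun i => by simp [hPdef, Ideal.one_eq_top]
  set j := Nat.findGreatest P j₀ with hjdef
  have hPj : P j := Nat.findGreatest_spec (Nat.zero_le j₀) hP0
  have hPj1 : ¬ P (j + 1) := by
    have hjne : j ≠ j₀ := fun h => hj₀ ((h ▸ hPj) i₀)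
    have hjle : j ≤ j₀ := Nat.findGreatest_le j₀
    exact Nat.findGreatest_is_greatest (Nat.lt_succ_self j)
      (Nat.succ_le_of_lt (lt_of_le_of_ne hjle hjne))
  have hmem2 : ∀ i, c i ∈ Ideal.span {π ^ j} := by
    intro i; rw [← Ideal.span_singleton_pow]; exact hPj i
  choose d hd using fun i => Ideal.mem_span_singleton'.mp (hmem2 i)
  -- hd : ∀ i, d i * π ^ j = c i
  have hex1 : ∃ i₁, d i₁ ∉ I := by
    by_contra hno
    push_neg at hno
    apply hPj1
    intro i
    obtain ⟨a, ha⟩ := Ideal.mem_span_singleton'.mp (hno i)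
    rw [← hd i, ← ha]
    rw [Ideal.span_singleton_pow]
    exact Ideal.mem_span_singleton'.mpr ⟨a, by ring⟩
  obtain ⟨i₁, hi₁⟩ := hex1
  have hθd : θ (d i₁) ≠ 0 := fun h => hi₁ (hker _ h)
  have hsum' : ∀ z, ∑ i, d i * x i z = 0 := by
    intro z
    have hπj : (π ^ j) ≠ 0 := pow_ne_zero _ hπ
    have hmul : π ^ j * ∑ i, d i * x i z = 0 := by
      rw [Finset.mul_sum, ← hsum z]
      refine Finset.sum_congr rfl fun i _ => ?_
      rw [← hd i]; ring
    rcases mul_eq_zero.mp hmul with h | h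
    · exact absurd h hπj
    · exact h
  have hrel : ∑ i, θ (d i) • f i = 0 := by
    funext z
    rw [Finset.sum_apply]
    have h4 := congrArg θ (hsum' z)
    rw [map_sum, map_zero] at h4
    simpa [hx] using h4
  exact hθd (Fintype.linearIndependent_iff.mp hf (fun i => θ (d i)) hrel i₁)

/-- Abstract form of the main theorem. -/
lemma main {N : ℕ} [NeZero N] (hN1 : 1 < N)
    (K : Type) [Field K] [Algebra R₀ K] [IsFractionRing R₀ K]
    (ω : R₀) (hω : IsPrimitiveRoot ω N) (hNR : ((N : ℕ) : R₀) ≠ 0)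
    (θ : R₀ →+* ZMod p) (hθω : θ ω = 1)
    (hker : ∀ a : R₀, θ a = 0 → a ∈ Ideal.span {ω - 1})
    {n : ℕ}
    (S : Finset (Fin n → ZMod N))
    (hS : ∀ b : Fin n → ZMod N, (∃ i, IsUnit (b i)) →
      ∃ u, ∀ t : ZMod N, u + t • b ∈ S)
    (A : Matrix ({b : Fin n → ZMod N // ∃ i, IsUnit (b i)} × ZMod N)
      (Fin n → ZMod N) (ZMod p))
    (hA : ∀ r y, A r y = if ∑ i, (r.1 : Fin n → ZMod N) i * y i = r.2 then 1 else 0) :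
    A.rank ≤ S.card := by
  -- the exponential function
  set e : ZMod N → R₀ := fun t => ω ^ t.val with he
  have he_add : ∀ a b : ZMod N, e (a + b) = e a * e b := by
    intro a b
    show ω ^ (a + b).val = ω ^ a.val * ω ^ b.val
    calc ω ^ (a + b).val = ω ^ ((a.val + b.val) % N) := by rw [ZMod.val_add]
      _ = ω ^ ((a.val + b.val) % orderOf ω) := by rw [← hω.eq_orderOf]
      _ = ω ^ (a.val + b.val) := pow_mod_orderOf _ _
      _ = ω ^ a.val * ω ^ b.val := pow_add _ _ _
  have he_zero : e 0 = 1 := by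
    show ω ^ (0 : ZMod N).val = 1
    rw [ZMod.val_zero, pow_zero]
  have hθe : ∀ t, θ (e t) = 1 := by
    intro t
    show θ (ω ^ t.val) = 1
    rw [map_pow, hθω, one_pow]
  have hsume : ∀ a : ZMod N, a ≠ 0 → ∑ t : ZMod N, e (t * a) = 0 := by
    intro a ha
    have hshift : e a * ∑ t : ZMod N, e (t * a) = ∑ t : ZMod N, e (t * a) := by
      rw [Finset.mul_sum]
      calc ∑ t : ZMod N, e a * e (t * a)
          = ∑ t : ZMod N, e ((t + 1) * a) := by
            refine Finset.sum_congr rfl fun t _ => ?_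
            rw [← he_add]; congr 1; ring
        _ = ∑ t : ZMod N, e (t * a) :=
            Fintype.sum_equiv (Equiv.addRight (1 : ZMod N)) _ _ (fun t => rfl)
    have hz : (e a - 1) * ∑ t : ZMod N, e (t * a) = 0 := by
      rw [sub_mul, one_mul, hshift, sub_self]
    rcases mul_eq_zero.mp hz with h | h
    · exfalso
      have hval : 0 < a.val := Nat.pos_of_ne_zero fun hh => ha ((ZMod.val_eq_zero a).mp hh)
      exact hω.pow_ne_one_of_pos_of_lt hval.ne' (ZMod.val_lt a) (sub_eq_zero.mp h)
    · exact h
  -- choose a line in every direction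
  choose u hu using fun ρ : {b : Fin n → ZMod N // ∃ i, IsUnit (b i)} × ZMod N =>
    hS ρ.1.1 ρ.1.2
  -- the span of the character vectors attached to points of S
  set W : Submodule K ((Fin n → ZMod N) → K) :=
    Submodule.span K (Set.range
      (fun s : {x // x ∈ S} => fun z => algebraMap R₀ K (e (ip z (s : Fin n → ZMod N)))))
    with hWdef
  -- lifted row vectors
  set xr : ({b : Fin n → ZMod N // ∃ i, IsUnit (b i)} × ZMod N) → (Fin n → ZMod N) → R₀ :=
    fun ρ z => e (ip z (u ρ)) *
      (if ip (ρ.1 : Fin n → ZMod N) z = ρ.2 then 1 else 0) with hxrdef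
  have hxrθ : ∀ ρ z, θ (xr ρ z) = A ρ z := by
    intro ρ z
    rw [hA]
    show θ (e (ip z (u ρ)) * (if ip (ρ.1 : Fin n → ZMod N) z = ρ.2 then 1 else 0)) = _
    rw [map_mul, hθe, one_mul, apply_ite θ, map_one, map_zero]
    unfold ip
    rfl
  have hxrW : ∀ ρ, (fun z => algebraMap R₀ K (xr ρ z)) ∈ W := by
    intro ρ
    have key : ∀ z, (N : R₀) * xr ρ z =
        ∑ t : ZMod N, e (t * (-ρ.2)) * e (ip z (u ρ + t • (ρ.1 : Fin n → ZMod N))) := by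
      intro z
      have h1 : ∀ t : ZMod N, e (t * (-ρ.2)) * e (ip z (u ρ + t • (ρ.1 : Fin n → ZMod N)))
          = e (ip z (u ρ)) * e (t * (ip z (ρ.1 : Fin n → ZMod N) - ρ.2)) := by
        intro t
        rw [ip_add_smul, ← he_add, ← he_add]
        congr 1
        ring
      rw [Finset.sum_congr rfl fun t _ => h1 t, ← Finset.mul_sum]
      by_cases hc : ip z (ρ.1 : Fin n → ZMod N) - ρ.2 = 0
      · have hcond : ip (ρ.1 : Fin n → ZMod N) z = ρ.2 := by
          rw [ip_comm]; exact sub_eq_zero.mp hc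
        have hsN : ∑ t : ZMod N, e (t * (ip z (ρ.1 : Fin n → ZMod N) - ρ.2)) = (N : R₀) := by
          rw [hc]
          simp only [mul_zero, he_zero]
          rw [Finset.sum_const, Finset.card_univ, ZMod.card, nsmul_eq_mul, mul_one]
        rw [hsN]
        show (N : R₀) * (e (ip z (u ρ)) *
          (if ip (ρ.1 : Fin n → ZMod N) z = ρ.2 then 1 else 0)) = _
        rw [if_pos hcond]; ring
      · rw [hsume _ hc]
        show (N : R₀) * (e (ip z (u ρ)) *
          (if ip (ρ.1 : Fin n → ZMod N) z = ρ.2 then 1 else 0)) = _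
        have hcond : ¬ (ip (ρ.1 : Fin n → ZMod N) z = ρ.2) := by
          rw [ip_comm]
          exact fun h => hc (by rw [h, sub_self])
        rw [if_neg hcond]; ring
    have hmemN : (fun z => algebraMap R₀ K ((N : R₀) * xr ρ z)) ∈ W := by
      have heq2 : (fun z => algebraMap R₀ K ((N : R₀) * xr ρ z))
          = ∑ t : ZMod N, (algebraMap R₀ K (e (t * (-ρ.2)))) •
              (fun z => algebraMap R₀ K (e (ip z (u ρ + t • (ρ.1 : Fin n → ZMod N))))) := by
        funext z
        rw [Finset.sum_apply]
        rw [key z, map_sum]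
        refine Finset.sum_congr rfl fun t _ => ?_
        rw [Pi.smul_apply, smul_eq_mul, ← map_mul]
      rw [heq2]
      refine Submodule.sum_mem W fun t _ => Submodule.smul_mem W _ ?_
      exact Submodule.subset_span ⟨⟨u ρ + t • (ρ.1 : Fin n → ZMod N), hu ρ t⟩, rfl⟩
    have hinj : Function.Injective (algebraMap R₀ K) := IsFractionRing.injective R₀ K
    have hNK : (algebraMap R₀ K ((N : ℕ) : R₀)) ≠ 0 := by
      intro h
      exact hNR (hinj (by rwa [map_zero]))
    have heq3 : (fun z => algebraMap R₀ K (xr ρ z))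
        = (algebraMap R₀ K ((N : ℕ) : R₀))⁻¹ • (fun z => algebraMap R₀ K ((N : R₀) * xr ρ z)) := by
      funext z
      rw [Pi.smul_apply, smul_eq_mul, eq_inv_mul_iff_mul_eq₀ hNK, ← map_mul]
    rw [heq3]
    exact Submodule.smul_mem W _ hmemN
  -- main rank computation
  rw [Matrix.rank_eq_finrank_span_row]
  change Module.finrank (ZMod p) (Submodule.span (ZMod p) (Set.range A)) ≤ S.card
  obtain ⟨bs, hbs_sub, hbs_span, hbs_ind⟩ :=
    exists_linearIndependent (ZMod p) (Set.range A)
  haveI : Fintype bs := (Set.toFinite bs).fintype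
  rw [← hbs_span, finrank_span_set_eq_card hbs_ind]
  choose rho hrho using fun w : bs => hbs_sub w.2
  have hπ : (ω - 1 : R₀) ≠ 0 := sub_ne_zero.mpr (hω.ne_one hN1)
  have hθπ : θ (ω - 1) = 0 := by rw [map_sub, hθω, map_one, sub_self]
  have hind := lift_indep K θ (ω - 1) hπ hθπ hker
    (fun w : bs => (w : (Fin n → ZMod N) → ZMod p)) hbs_ind
    (fun w => xr (rho w)) (fun w z => by rw [hxrθ, hrho])
  have hmemW : ∀ w : bs, (fun z => algebraMap R₀ K (xr (rho w) z)) ∈ W :=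
    fun w => hxrW (rho w)
  set v : bs → W := fun w => (⟨_, hmemW w⟩ : W) with hvdef
  have hindv : LinearIndependent K v := by
    apply LinearIndependent.of_comp W.subtype
    have hcomp : (⇑W.subtype ∘ v) = fun w : bs => fun z => algebraMap R₀ K (xr (rho w) z) := rfl
    rw [hcomp]
    exact hind
  have hcard : Fintype.card bs ≤ Module.finrank K W := hindv.fintype_card_le_finrank
  have hWle : Module.finrank K W ≤ S.card := by
    have h := finrank_range_le_card (R := K)
      (fun s : {x // x ∈ S} => fun z => algebraMap R₀ K (e (ip z (s : Fin n → ZMod N))))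
    simpa [Set.finrank, Fintype.card_coe, ← hWdef] using h
  calc bs.toFinset.card = Fintype.card bs := Set.toFinset_card bs
    _ ≤ Module.finrank K W := hcard
    _ ≤ S.card := hWle

end Lift

end KakeyaAux

structure KakeyaPack (p N : ℕ) [Fact p.Prime] where
  R₀ : Type
  [cr : CommRing R₀]
  [dom : IsDomain R₀]
  [noeth : IsNoetherianRing R₀]
  ω : R₀
  θ : R₀ →+* ZMod p
  hω : IsPrimitiveRoot ω N
  hNR : ((N : ℕ) : R₀) ≠ 0
  hθω : θ ω = 1
  hker : ∀ a : R₀, θ a = 0 → a ∈ Ideal.span {ω - 1}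

lemma kakeyaPack_exists (p k' N : ℕ) [hp : Fact p.Prime] (hNeq : N = p ^ (k' + 1)) :
    Nonempty (KakeyaPack p N) := by
  classical
  subst hNeq
  set N := p ^ (k' + 1) with hNdef
  have hNpos : 0 < N := pow_pos hp.out.pos _
  set f₀ : ℤ[X] := Polynomial.cyclotomic N ℤ with hf₀def
  have hirr : Irreducible f₀ := Polynomial.cyclotomic.irreducible hNpos
  have hprime : Prime f₀ := UniqueFactorizationMonoid.irreducible_iff_prime.mp hirr
  haveI hdom : IsDomain (AdjoinRoot f₀) := AdjoinRoot.isDomain_of_prime hprime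
  set ω : AdjoinRoot f₀ := AdjoinRoot.root f₀ with hωdef
  have hev : Polynomial.eval₂ (Int.castRingHom (ZMod p)) 1 f₀ = 0 := by
    rw [hf₀def, hNdef, Polynomial.eval₂_one_cyclotomic_prime_pow]
    exact_mod_cast ZMod.natCast_self p
  set θ : AdjoinRoot f₀ →+* ZMod p := AdjoinRoot.lift (Int.castRingHom (ZMod p)) 1 hev
    with hθdef
  have hθω : θ ω = 1 := AdjoinRoot.lift_root hev
  have hNR : ((N : ℕ) : AdjoinRoot f₀) ≠ 0 := by
    intro h
    rw [show ((N : ℕ) : AdjoinRoot f₀) = AdjoinRoot.mk f₀ ((N : ℕ) : ℤ[X]) from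
      (map_natCast (AdjoinRoot.mk f₀) N).symm, AdjoinRoot.mk_eq_zero] at h
    have hne : ((N : ℕ) : ℤ[X]) ≠ 0 := Nat.cast_ne_zero.mpr (by omega)
    have hdeg := Polynomial.natDegree_le_of_dvd h hne
    rw [Polynomial.natDegree_natCast, hf₀def, Polynomial.natDegree_cyclotomic] at hdeg
    have htot := Nat.totient_pos.mpr hNpos
    omega
  haveI : NeZero ((N : ℕ) : AdjoinRoot f₀) := ⟨hNR⟩
  have hroot : Polynomial.IsRoot (Polynomial.cyclotomic N (AdjoinRoot f₀)) ω := by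
    rw [← Polynomial.map_cyclotomic_int N (AdjoinRoot f₀)]
    rw [Polynomial.IsRoot, Polynomial.eval_map]
    rw [show Int.castRingHom (AdjoinRoot f₀) = AdjoinRoot.of f₀ from Subsingleton.elim _ _]
    exact AdjoinRoot.eval₂_root f₀
  have hω : IsPrimitiveRoot ω N := Polynomial.isRoot_cyclotomic_iff.mp hroot
  -- p lies in the ideal (ω - 1)
  have hpmem : ((p : ℕ) : AdjoinRoot f₀) ∈ Ideal.span {ω - 1} := by
    obtain ⟨g, hg⟩ := Polynomial.X_sub_C_dvd_sub_C_eval (a := (1 : ℤ)) (p := f₀)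
    have hev1 : f₀.eval 1 = (p : ℤ) := by
      rw [hf₀def, hNdef]
      exact_mod_cast Polynomial.eval_one_cyclotomic_prime_pow _
    rw [hev1] at hg
    have h5 := congrArg (AdjoinRoot.mk f₀) hg
    rw [map_sub, AdjoinRoot.mk_self, map_mul, map_sub, AdjoinRoot.mk_X] at h5
    rw [show (Polynomial.C (1 : ℤ)) = (1 : ℤ[X]) from Polynomial.C_1, map_one] at h5
    rw [show (Polynomial.C ((p : ℕ) : ℤ)) = (((p : ℕ) : ℤ) : ℤ[X]) from
      Polynomial.C_eq_intCast _, map_intCast] at h5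
    refine Ideal.mem_span_singleton'.mpr ⟨- AdjoinRoot.mk f₀ g, ?_⟩
    have h6 : (((p : ℕ) : ℤ) : AdjoinRoot f₀) = ((p : ℕ) : AdjoinRoot f₀) := Int.cast_natCast p
    rw [← h6]
    linear_combination h5
  have hker : ∀ a : AdjoinRoot f₀, θ a = 0 → a ∈ Ideal.span {ω - 1} := by
    intro a ha
    obtain ⟨q, rfl⟩ := AdjoinRoot.mk_surjective a
    rw [hθdef, AdjoinRoot.lift_mk, Polynomial.eval₂_at_one] at ha
    have hdvd : ((p : ℕ) : ℤ) ∣ q.eval 1 := by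
      have := (ZMod.intCast_zmod_eq_zero_iff_dvd (q.eval 1) p).mp (by exact_mod_cast ha)
      exact_mod_cast this
    obtain ⟨m, hm⟩ := hdvd
    obtain ⟨g, hg⟩ := Polynomial.X_sub_C_dvd_sub_C_eval (a := (1 : ℤ)) (p := q)
    have h5 := congrArg (AdjoinRoot.mk f₀) hg
    rw [map_sub, map_mul, map_sub, AdjoinRoot.mk_X] at h5
    rw [show (Polynomial.C (1 : ℤ)) = (1 : ℤ[X]) from Polynomial.C_1, map_one] at h5
    rw [show (Polynomial.C (q.eval 1)) = ((q.eval 1 : ℤ) : ℤ[X]) from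
      Polynomial.C_eq_intCast _, map_intCast, hm] at h5
    have hpm : ((((p : ℕ) : ℤ) * m : ℤ) : AdjoinRoot f₀) ∈ Ideal.span {ω - 1} := by
      push_cast
      exact Ideal.mul_mem_right _ _ hpmem
    have h7 : AdjoinRoot.mk f₀ q
        = (ω - 1) * AdjoinRoot.mk f₀ g + ((((p : ℕ) : ℤ) * m : ℤ) : AdjoinRoot f₀) := by
      linear_combination h5
    rw [h7]
    refine Ideal.add_mem _ ?_ hpm
    exact Ideal.mul_mem_right _ _ (Ideal.mem_span_singleton.mpr dvd_rfl)
  exact ⟨{ R₀ := AdjoinRoot f₀, ω := ω, θ := θ, hω := hω, hNR := hNR, hθω := hθω,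
           hker := hker }⟩

theorem stmt4 (p k n : ℕ) [hp : Fact p.Prime] (hk : 1 ≤ k)
    (S : Finset (Fin n → ZMod (p ^ k)))
    (hS : ∀ b : Fin n → ZMod (p ^ k), (∃ i, IsUnit (b i)) →
      ∃ u, ∀ t : ZMod (p ^ k), u + t • b ∈ S)
    (A : Matrix ({b : Fin n → ZMod (p ^ k) // ∃ i, IsUnit (b i)} × ZMod (p ^ k))
      (Fin n → ZMod (p ^ k)) (ZMod p))
    (hA : ∀ r y, A r y =
      if ∑ i, (r.1 : Fin n → ZMod (p ^ k)) i * y i = r.2 then 1 else 0) :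
    A.rank ≤ S.card := by
  classical
  have hN1 : 1 < p ^ k := Nat.one_lt_pow (by omega) hp.out.one_lt
  haveI : NeZero (p ^ k) := ⟨by omega⟩
  obtain ⟨P⟩ := kakeyaPack_exists p (k - 1) (p ^ k) (by congr 1; omega)
  letI := P.cr
  letI := P.dom
  letI := P.noeth
  exact KakeyaAux.main hN1 (FractionRing P.R₀) P.ω P.hω P.hNR P.θ P.hθω P.hker S hS A hA
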